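/- arXiv:1911.06625 — 2 statements merged into one kernel-verified Lean document; each statement's English description precedes it below -/
import Mathlib

section
/- Let (M; ∨, ∧, ⊕, ⊖, 0) be a wEMV-algebra and a ∈ M. Define on the interval [0,a] = {x ∈ M : x ≤ a} the operations x ⊕ₐ y = (x ⊕ y) ∧ a and λₐ(x) = a ⊖ x. Then ([0,a]; ⊕ₐ, λₐ, 0, a) is an MV-algebra, i.e., for all x, y ∈ [0,a]: ⊕ₐ is a commutative associative operation on [0,a] with neutral element 0, λₐ(λₐ(x)) = x, x ⊕ₐ a = a, and x ⊕ₐ λₐ(x ⊕ₐ λₐ(y)) = y ⊕ₐ λₐ(y ⊕ₐ λₐ(x)). Moreover, for all x, y ∈ [0,a], a ⊖ ((a ⊖ x) ⊕ₐ y) = x ⊖ y. -/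
universe u

class WEMV (M : Type u) extends DistribLattice M, Zero M where
  oplus : M → M → M
  ominus : M → M → M
  zero_le : ∀ x : M, 0 ≤ x
  oplus_comm : ∀ x y : M, oplus x y = oplus y x
  oplus_assoc : ∀ x y z : M, oplus (oplus x y) z = oplus x (oplus y z)
  oplus_zero : ∀ x : M, oplus x 0 = x
  ominus_oplus_le : ∀ x y : M, ominus (oplus x y) x ≤ y
  oplus_ominus : ∀ x y : M, oplus x (ominus y x) = x ⊔ y
  ominus_inf : ∀ x y : M, ominus x (x ⊓ y) = ominus x y
  ominus_ominus : ∀ x z : M, ominus z (ominus z x) = x ⊓ z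
  ominus_sup : ∀ x y z : M, ominus z (x ⊔ y) = ominus z x ⊓ ominus z y
  inf_ominus : ∀ x y z : M, ominus (x ⊓ y) z = ominus x z ⊓ ominus y z
  ominus_oplus_assoc : ∀ x y z : M, ominus x (oplus y z) = ominus (ominus x y) z
  oplus_sup : ∀ x y z : M, oplus x (y ⊔ z) = oplus x y ⊔ oplus x z

open WEMV

section Aux
variable {M : Type u} [WEMV M]

lemma wzero_oplus (x : M) : oplus 0 x = x := by rw [oplus_comm, oplus_zero]

lemma wominus_zero (x : M) : ominus x 0 = x := by
  have h := oplus_ominus (0 : M) x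
  rw [wzero_oplus, sup_eq_right.mpr (WEMV.zero_le x)] at h
  exact h

lemma woplus_le_right {y z : M} (x : M) (h : y ≤ z) : oplus x y ≤ oplus x z := by
  have h2 := oplus_sup x y z
  rw [sup_eq_right.mpr h] at h2
  rw [h2]; exact le_sup_left

lemma wominus_le (x y : M) : ominus x y ≤ x := by
  have h := ominus_sup (0 : M) y x
  rw [sup_eq_right.mpr (WEMV.zero_le y), wominus_zero] at h
  rw [h]; exact inf_le_left

lemma wominus_self (x : M) : ominus x x = 0 := by
  have h := ominus_oplus_le x (0 : M)
  rw [oplus_zero] at h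
  exact le_antisymm h (WEMV.zero_le _)

lemma wominus_eq_zero {x y : M} (h : x ≤ y) : ominus x y = 0 := by
  have h2 := ominus_inf x y
  rw [inf_eq_left.mpr h] at h2
  rw [← h2, wominus_self]

lemma wle_of_ominus {x y : M} (h : ominus x y = 0) : x ≤ y := by
  have h2 := oplus_ominus y x
  rw [h, oplus_zero] at h2
  exact le_sup_right.trans h2.ge

lemma wkey {t a : M} (s : M) (ht : t ≤ a) :
    oplus (s ⊓ a) t ⊓ a = oplus s t ⊓ a := by
  apply le_antisymm
  · refine inf_le_inf_right a ?_
    rw [oplus_comm _ t, oplus_comm s t]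
    exact woplus_le_right t inf_le_left
  · refine le_inf ?_ inf_le_right
    apply wle_of_ominus
    rw [oplus_comm (s ⊓ a) t, ominus_oplus_assoc]
    apply wominus_eq_zero
    rw [inf_ominus]
    have h1 : ominus (oplus s t) t ≤ s := by
      rw [oplus_comm]; exact ominus_oplus_le t s
    exact inf_le_inf h1 (wominus_le a t)

lemma wominus_inf_a (a u : M) : ominus a (u ⊓ a) = ominus a u := by
  rw [inf_comm, ominus_inf]

lemma wluk {x y a : M} (hx : x ≤ a) (hy : y ≤ a) :
    oplus x (ominus a (oplus x (ominus a y) ⊓ a)) ⊓ a = x ⊔ y := by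
  rw [wominus_inf_a, oplus_comm x (ominus a y), ominus_oplus_assoc,
    ominus_ominus, inf_eq_left.mpr hy, oplus_ominus,
    inf_eq_left.mpr (sup_le hx hy)]

end Aux

theorem stmt7 {M : Type u} [WEMV M] (a : M) :
    ∀ x y z : M, x ≤ a → y ≤ a → z ≤ a →
      (oplus x y ⊓ a ≤ a) ∧
      (ominus a x ≤ a) ∧
      (oplus x y ⊓ a = oplus y x ⊓ a) ∧
      (oplus (oplus x y ⊓ a) z ⊓ a = oplus x (oplus y z ⊓ a) ⊓ a) ∧
      (oplus x (0 : M) ⊓ a = x) ∧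
      (ominus a (ominus a x) = x) ∧
      (oplus x a ⊓ a = a) ∧
      (oplus x (ominus a (oplus x (ominus a y) ⊓ a)) ⊓ a
        = oplus y (ominus a (oplus y (ominus a x) ⊓ a)) ⊓ a) ∧
      (ominus a (oplus (ominus a x) y ⊓ a) = ominus x y) := by
  intro x y z hx hy hz
  refine ⟨inf_le_right, wominus_le a x, by rw [oplus_comm], ?_, ?_, ?_, ?_, ?_, ?_⟩
  · rw [wkey (oplus x y) hz, oplus_comm x (oplus y z ⊓ a), wkey (oplus y z) hx,
      oplus_comm (oplus y z) x, oplus_assoc]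
  · rw [oplus_zero, inf_eq_left.mpr hx]
  · rw [ominus_ominus, inf_eq_left.mpr hx]
  · rw [inf_eq_right]
    have : a = oplus a 0 := (oplus_zero a).symm
    calc a = oplus a 0 := (oplus_zero a).symm
      _ ≤ oplus a x := woplus_le_right a (WEMV.zero_le x)
      _ = oplus x a := oplus_comm a x
  · rw [wluk hx hy, wluk hy hx, sup_comm]
  · rw [wominus_inf_a, ominus_oplus_assoc, ominus_ominus, inf_eq_left.mpr hx]
end

section
/- Let I be an ideal of a wEMV-algebra (M; ∨, ∧, ⊕, ⊖, 0). Then the relation θ_I := {(x, y) ∈ M × M : x ⊖ y ∈ I and y ⊖ x ∈ I} is a congruence relation on M; that is, θ_I is an equivalence relation and for every z ∈ M and every (x, y) ∈ θ_I and every operation * ∈ {∨, ∧, ⊕, ⊖}, both (x * z, y * z) ∈ θ_I and (z * x, z * y) ∈ θ_I. -/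
universe u

open WEMV

section Lemmas

variable {M : Type u} [WEMV M]

lemma wemv_ominus_self (x : M) : ominus x x = (0 : M) := by
  apply le_antisymm
  · have h := ominus_oplus_le x (0 : M)
    rwa [oplus_zero] at h
  · exact WEMV.zero_le _

lemma wemv_mono1 {x y : M} (z : M) (h : x ≤ y) : ominus x z ≤ ominus y z := by
  have h2 := inf_ominus x y z
  rw [inf_eq_left.mpr h] at h2
  rw [h2]; exact inf_le_right

lemma wemv_anti2 {x y : M} (z : M) (h : x ≤ y) : ominus z y ≤ ominus z x := by
  have h2 := ominus_sup x y z
  rw [sup_eq_right.mpr h] at h2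
  rw [h2]; exact inf_le_left

lemma wemv_oplus_mono {x y : M} (z : M) (h : x ≤ y) : oplus z x ≤ oplus z y := by
  have h2 := oplus_sup z x y
  rw [sup_eq_right.mpr h] at h2
  rw [h2]; exact le_sup_left

lemma wemv_oplus_mono' {x y : M} (z : M) (h : x ≤ y) : oplus x z ≤ oplus y z := by
  rw [oplus_comm x z, oplus_comm y z]; exact wemv_oplus_mono z h

lemma wemv_le_oplus (x z : M) : x ≤ oplus x z := by
  have h := wemv_oplus_mono x (WEMV.zero_le z)
  rwa [oplus_zero] at h

lemma wemv_cancel {x y c : M} (h : x ≤ oplus y c) : ominus x y ≤ c :=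
  le_trans (wemv_mono1 y h) (ominus_oplus_le y c)

lemma wemv_triangle (x y z : M) :
    ominus x z ≤ oplus (ominus x y) (ominus y z) := by
  apply wemv_cancel
  have h1 : oplus z (oplus (ominus x y) (ominus y z))
      = oplus (oplus z (ominus y z)) (ominus x y) := by
    rw [oplus_assoc, oplus_comm (ominus x y) (ominus y z)]
  rw [h1, oplus_ominus]
  calc x ≤ oplus y (ominus x y) := by
        rw [oplus_ominus]; exact le_sup_right
    _ ≤ oplus (z ⊔ y) (ominus x y) := wemv_oplus_mono' _ le_sup_right

lemma wemv_sup_le (x y z : M) : ominus (x ⊔ z) (y ⊔ z) ≤ ominus x y := by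
  apply wemv_cancel
  have h : oplus (y ⊔ z) (ominus x y)
      = oplus (ominus x y) y ⊔ oplus (ominus x y) z := by
    rw [oplus_comm, oplus_sup]
  rw [h]
  apply sup_le
  · refine le_trans ?_ le_sup_left
    rw [oplus_comm, oplus_ominus]; exact le_sup_right
  · refine le_trans ?_ le_sup_right
    rw [oplus_comm]; exact wemv_le_oplus z _

lemma wemv_inf_le (x y z : M) : ominus (x ⊓ z) (y ⊓ z) ≤ ominus x y := by
  have h1 : (x ⊓ z) ⊓ y ≤ y ⊓ z :=
    le_inf inf_le_right (le_trans inf_le_left inf_le_right)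
  have h2 : ominus (x ⊓ z) (y ⊓ z) ≤ ominus (x ⊓ z) ((x ⊓ z) ⊓ y) :=
    wemv_anti2 _ h1
  rw [ominus_inf] at h2
  exact le_trans h2 (wemv_mono1 _ inf_le_left)

lemma wemv_oplus_le (x y z : M) :
    ominus (oplus x z) (oplus y z) ≤ ominus x y := by
  apply wemv_cancel
  have h : oplus (oplus y z) (ominus x y)
      = oplus z (oplus y (ominus x y)) := by
    rw [oplus_comm y z, oplus_assoc]
  rw [h, oplus_ominus]
  calc oplus x z = oplus z x := oplus_comm x z
    _ ≤ oplus z (y ⊔ x) := wemv_oplus_mono _ le_sup_right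

lemma wemv_ominus_le1 (x y z : M) :
    ominus (ominus x z) (ominus y z) ≤ ominus x y := by
  have h : ominus (ominus x z) (ominus y z) = ominus x (z ⊔ y) := by
    rw [← ominus_oplus_assoc, oplus_ominus]
  rw [h]; exact wemv_anti2 _ le_sup_right

lemma wemv_ominus_le2 (x y z : M) :
    ominus (ominus z x) (ominus z y) ≤ ominus y x :=
  wemv_cancel (wemv_triangle z y x)

end Lemmas

theorem stmt9 {M : Type u} [WEMV M] (I : Set M)
    (hne : I.Nonempty)
    (hdown : ∀ x y : M, y ≤ x → x ∈ I → y ∈ I)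
    (hplus : ∀ x ∈ I, ∀ y ∈ I, oplus x y ∈ I) :
    Equivalence (fun x y : M => ominus x y ∈ I ∧ ominus y x ∈ I) ∧
    (∀ x y z : M, (ominus x y ∈ I ∧ ominus y x ∈ I) →
      ((ominus (x ⊔ z) (y ⊔ z) ∈ I ∧ ominus (y ⊔ z) (x ⊔ z) ∈ I) ∧
       (ominus (z ⊔ x) (z ⊔ y) ∈ I ∧ ominus (z ⊔ y) (z ⊔ x) ∈ I) ∧
       (ominus (x ⊓ z) (y ⊓ z) ∈ I ∧ ominus (y ⊓ z) (x ⊓ z) ∈ I) ∧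
       (ominus (z ⊓ x) (z ⊓ y) ∈ I ∧ ominus (z ⊓ y) (z ⊓ x) ∈ I) ∧
       (ominus (oplus x z) (oplus y z) ∈ I ∧ ominus (oplus y z) (oplus x z) ∈ I) ∧
       (ominus (oplus z x) (oplus z y) ∈ I ∧ ominus (oplus z y) (oplus z x) ∈ I) ∧
       (ominus (ominus x z) (ominus y z) ∈ I ∧ ominus (ominus y z) (ominus x z) ∈ I) ∧
       (ominus (ominus z x) (ominus z y) ∈ I ∧ ominus (ominus z y) (ominus z x) ∈ I))) := by
  obtain ⟨a, ha⟩ := hne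
  have h0 : (0 : M) ∈ I := hdown a 0 (WEMV.zero_le a) ha
  constructor
  · refine ⟨fun x => ?_, fun h => ⟨h.2, h.1⟩, fun {x y z} hxy hyz => ?_⟩
    · rw [wemv_ominus_self]; exact ⟨h0, h0⟩
    · refine ⟨hdown _ _ (wemv_triangle x y z) (hplus _ hxy.1 _ hyz.1),
        hdown _ _ (wemv_triangle z y x) (hplus _ hyz.2 _ hxy.2)⟩
  · rintro x y z ⟨h1, h2⟩
    refine ⟨⟨hdown _ _ (wemv_sup_le x y z) h1, hdown _ _ (wemv_sup_le y x z) h2⟩,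
      ?_, ⟨hdown _ _ (wemv_inf_le x y z) h1, hdown _ _ (wemv_inf_le y x z) h2⟩,
      ?_,
      ⟨hdown _ _ (wemv_oplus_le x y z) h1, hdown _ _ (wemv_oplus_le y x z) h2⟩,
      ?_,
      ⟨hdown _ _ (wemv_ominus_le1 x y z) h1, hdown _ _ (wemv_ominus_le1 y x z) h2⟩,
      ⟨hdown _ _ (wemv_ominus_le2 x y z) h2, hdown _ _ (wemv_ominus_le2 y x z) h1⟩⟩
    · rw [sup_comm z x, sup_comm z y]
      exact ⟨hdown _ _ (wemv_sup_le x y z) h1, hdown _ _ (wemv_sup_le y x z) h2⟩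
    · rw [inf_comm z x, inf_comm z y]
      exact ⟨hdown _ _ (wemv_inf_le x y z) h1, hdown _ _ (wemv_inf_le y x z) h2⟩
    · rw [oplus_comm z x, oplus_comm z y]
      exact ⟨hdown _ _ (wemv_oplus_le x y z) h1, hdown _ _ (wemv_oplus_le y x z) h2⟩
end
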